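/- arXiv:2207.13312 — 2 statements merged into one kernel-verified Lean document; each statement's English description precedes it below -/
import Mathlib

section
/- For every f : 𝔽₂ⁿ → [-1,1] and every δ > 0, there exists an affine subspace 𝒰 = α + 𝒱 of 𝔽₂ⁿ with codimension codim(𝒱) = n − dim(𝒱) at most 1/δ such that the restriction f_𝒰 is δ-regular. -/
open Finset

abbrev F2 (n : ℕ) := Fin n → ZMod 2

/-- The 𝔽₂ bilinear form ⟨γ,x⟩ = Σᵢ γᵢ xᵢ. -/
def ip {n : ℕ} (γ x : F2 n) : ZMod 2 := ∑ i, γ i * x i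

/-- The character χ_γ(x) = (-1)^⟨γ,x⟩. -/
noncomputable def chi {n : ℕ} (γ x : F2 n) : ℝ := (-1 : ℝ) ^ (ip γ x).val

/-- Fourier coefficient f̂(γ) = 2^{-n} Σ_x f(x) (-1)^⟨γ,x⟩. -/
noncomputable def fCoeff {n : ℕ} (f : F2 n → ℝ) (γ : F2 n) : ℝ :=
  (∑ x : F2 n, f x * chi γ x) / 2 ^ n

/-- f has Fourier degree at most d. -/
def HasFourierDegLE {n : ℕ} (f : F2 n → ℝ) (d : ℕ) : Prop :=
  ∀ γ : F2 n, d < hammingNorm γ → fCoeff f γ = 0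

/-- Orthogonal subspace 𝒱^⊥. -/
def perp {n : ℕ} (V : Submodule (ZMod 2) (F2 n)) : Submodule (ZMod 2) (F2 n) where
  carrier := {γ | ∀ v ∈ V, ip γ v = 0}
  zero_mem' := by
    intro v _
    simp [ip]
  add_mem' := by
    intro a b ha hb v hv
    have h : ip (a + b) v = ip a v + ip b v := by
      simp [ip, add_mul, Finset.sum_add_distrib]
    simp only [Set.mem_setOf_eq] at ha hb ⊢
    rw [h, ha v hv, hb v hv, add_zero]
  smul_mem' := by
    intro c a ha v hv
    have h : ip (c • a) v = c * ip a v := by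
      simp [ip, Finset.mul_sum, mul_assoc]
    simp only [Set.mem_setOf_eq] at ha ⊢
    rw [h, ha v hv, mul_zero]

/-- Fourier coefficient of the restriction of f to the affine subspace α + 𝒱,
indexed by γ (from a complement 𝒲 of 𝒱^⊥):
f̂_𝒰(γ) = |𝒱|⁻¹ Σ_{x ∈ 𝒱} f(x+α)(-1)^⟨γ,x⟩. -/
noncomputable def restrictCoeff {n : ℕ} (f : F2 n → ℝ) (V : Submodule (ZMod 2) (F2 n))
    (α γ : F2 n) : ℝ :=
  (∑ x : F2 n, Set.indicator (V : Set (F2 n)) (fun x => f (x + α) * chi γ x) x) / (Nat.card V)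

/-- The restriction of f to α + 𝒱 is δ-regular. -/
def IsDeltaRegular {n : ℕ} (f : F2 n → ℝ) (V : Submodule (ZMod 2) (F2 n)) (α : F2 n)
    (δ : ℝ) : Prop :=
  ∀ W : Submodule (ZMod 2) (F2 n), IsCompl W (perp V) →
    ∀ γ ∈ W, γ ≠ 0 → |restrictCoeff f V α γ| ≤ δ

/-- span of the standard basis vectors indexed by J. -/
def spanJ {n : ℕ} (J : Finset (Fin n)) : Submodule (ZMod 2) (F2 n) where
  carrier := {x | ∀ i ∉ J, x i = 0}
  zero_mem' := by intro i _; rfl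
  add_mem' := by
    intro a b ha hb i hi
    simp only [Set.mem_setOf_eq] at ha hb ⊢
    simp [Pi.add_apply, ha i hi, hb i hi]
  smul_mem' := by
    intro c a ha i hi
    simp only [Set.mem_setOf_eq] at ha ⊢
    simp [Pi.smul_apply, ha i hi]

section Aux
variable {n : ℕ}

lemma ip_add_right (γ x y : F2 n) : ip γ (x + y) = ip γ x + ip γ y := by
  simp [ip, mul_add, Finset.sum_add_distrib]

lemma ip_smul_right (γ : F2 n) (c : ZMod 2) (x : F2 n) : ip γ (c • x) = c * ip γ x := by
  simp [ip, Finset.mul_sum]; ring_nf; simp [mul_comm, mul_left_comm]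

/-- The linear map x ↦ ip γ x. -/
def ipL (γ : F2 n) : F2 n →ₗ[ZMod 2] ZMod 2 where
  toFun := ip γ
  map_add' := ip_add_right γ
  map_smul' := ip_smul_right γ

lemma zmod2_cases (a : ZMod 2) : a = 0 ∨ a = 1 := by revert a; decide

lemma chi_zero (x : F2 n) : chi 0 x = 1 := by
  simp [chi, ip]

lemma chi_of_ip_zero {γ x : F2 n} (h : ip γ x = 0) : chi γ x = 1 := by
  simp [chi, h]

lemma chi_of_ip_one {γ x : F2 n} (h : ip γ x = 1) : chi γ x = -1 := by
  simp [chi, h, ZMod.val_one]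

lemma card_eq_sum_indicator (V : Submodule (ZMod 2) (F2 n)) :
    ((Nat.card V : ℝ)) = ∑ x : F2 n, Set.indicator (V : Set (F2 n)) (fun _ => (1:ℝ)) x := by
  classical
  simp only [Set.indicator_apply, SetLike.mem_coe]
  rw [Finset.sum_boole, Nat.card_eq_fintype_card]
  norm_num [Fintype.card_subtype]

end Aux
section Aux2
variable {n : ℕ}

lemma sum_split (V : Submodule (ZMod 2) (F2 n)) (γ v₁ : F2 n) (hv₁ : v₁ ∈ V)
    (h1 : ip γ v₁ = 1) (g : F2 n → ℝ) :
    ∑ x : F2 n, Set.indicator (V : Set (F2 n)) g x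
      = ∑ x : F2 n, Set.indicator ((V ⊓ LinearMap.ker (ipL γ) : Submodule (ZMod 2) (F2 n)) : Set (F2 n)) g x
      + ∑ x : F2 n, Set.indicator ((V ⊓ LinearMap.ker (ipL γ) : Submodule (ZMod 2) (F2 n)) : Set (F2 n)) (fun x => g (x + v₁)) x := by
  classical
  have hmem : ∀ x : F2 n, (x ∈ V ⊓ LinearMap.ker (ipL γ)) ↔ (x ∈ V ∧ ip γ x = 0) := by
    intro x; simp [Submodule.mem_inf, LinearMap.mem_ker, ipL]
  simp only [Set.indicator_apply, SetLike.mem_coe, hmem]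
  have step1 : ∑ x : F2 n, (if x ∈ V then g x else 0)
      = ∑ x : F2 n, ((if x ∈ V ∧ ip γ x = 0 then g x else 0)
        + (if x ∈ V ∧ ip γ x = 1 then g x else 0)) := by
    refine Finset.sum_congr rfl fun x _ => ?_
    by_cases hx : x ∈ V
    · rcases zmod2_cases (ip γ x) with h | h <;> simp [hx, h]
    · simp [hx]
  rw [step1, Finset.sum_add_distrib]
  congr 1
  refine Fintype.sum_bijective (· + v₁) (Equiv.addRight v₁).bijective _ _ fun x => ?_
  by_cases hx : x ∈ V
  · have hx' : x + v₁ ∈ V := by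
      exact (Submodule.add_mem_iff_left V hv₁).mpr hx
    rw [ip_add_right, h1]
    have e2 : (1 + 1 : ZMod 2) = 0 := by decide
    have ev : x + v₁ + v₁ = x := by
      have hvv : v₁ + v₁ = 0 := by
        funext i
        exact CharTwo.add_self_eq_zero (v₁ i)
      rw [add_assoc, hvv, add_zero]
    rcases zmod2_cases (ip γ x) with h | h <;> simp [hx, hx', h, e2, ev]
  · have hx' : ¬ (x + v₁ ∈ V) := by
      intro hc; exact hx ((Submodule.add_mem_iff_left V hv₁).mp hc)
    simp [hx, hx']

end Aux2
section Aux3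
variable {n : ℕ}

lemma card_split (V : Submodule (ZMod 2) (F2 n)) (γ v₁ : F2 n) (hv₁ : v₁ ∈ V)
    (h1 : ip γ v₁ = 1) :
    Nat.card V = 2 * Nat.card (V ⊓ LinearMap.ker (ipL γ) : Submodule (ZMod 2) (F2 n)) := by
  have := sum_split V γ v₁ hv₁ h1 (fun _ => (1:ℝ))
  rw [← card_eq_sum_indicator, ← card_eq_sum_indicator] at this
  have h2 : ((Nat.card V : ℝ)) = 2 * Nat.card (V ⊓ LinearMap.ker (ipL γ) : Submodule (ZMod 2) (F2 n)) := by
    rw [this]; ring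
  exact_mod_cast h2

lemma card_pos (V : Submodule (ZMod 2) (F2 n)) : 0 < Nat.card V :=
  Nat.card_pos

lemma card_pow (V : Submodule (ZMod 2) (F2 n)) :
    Nat.card V = 2 ^ Module.finrank (ZMod 2) V := by
  classical
  have : Fintype ↥V := Fintype.ofFinite _
  rw [Nat.card_eq_fintype_card, Module.card_eq_pow_finrank (K := ZMod 2) (V := ↥V), ZMod.card]

lemma finrank_split (V : Submodule (ZMod 2) (F2 n)) (γ v₁ : F2 n) (hv₁ : v₁ ∈ V)
    (h1 : ip γ v₁ = 1) :
    Module.finrank (ZMod 2) V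
      = Module.finrank (ZMod 2) (V ⊓ LinearMap.ker (ipL γ) : Submodule (ZMod 2) (F2 n)) + 1 := by
  have h := card_split V γ v₁ hv₁ h1
  rw [card_pow, card_pow] at h
  have : (2:ℕ) ^ Module.finrank (ZMod 2) V
      = 2 ^ (Module.finrank (ZMod 2) (V ⊓ LinearMap.ker (ipL γ) : Submodule (ZMod 2) (F2 n)) + 1) := by
    rw [pow_succ, h]; ring
  exact Nat.pow_right_injective (by norm_num) this

end Aux3
section Aux4
variable {n : ℕ}

lemma rc_zero_eq (f : F2 n → ℝ) (V : Submodule (ZMod 2) (F2 n)) (α : F2 n) :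
    restrictCoeff f V α 0
      = (∑ x : F2 n, Set.indicator (V : Set (F2 n)) (fun x => f (x + α)) x) / Nat.card V := by
  unfold restrictCoeff
  congr 1
  refine Finset.sum_congr rfl fun x _ => ?_
  have : (fun x => f (x + α) * chi (0 : F2 n) x) = fun x => f (x + α) := by
    funext y; rw [chi_zero, mul_one]
  rw [this]

lemma rc_split (f : F2 n → ℝ) (V : Submodule (ZMod 2) (F2 n)) (α γ v₁ : F2 n)
    (hv₁ : v₁ ∈ V) (h1 : ip γ v₁ = 1) :
    restrictCoeff f (V ⊓ LinearMap.ker (ipL γ)) α 0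
        = restrictCoeff f V α 0 + restrictCoeff f V α γ ∧
    restrictCoeff f (V ⊓ LinearMap.ker (ipL γ)) (α + v₁) 0
        = restrictCoeff f V α 0 - restrictCoeff f V α γ := by
  classical
  set V' : Submodule (ZMod 2) (F2 n) := V ⊓ LinearMap.ker (ipL γ) with hV'
  have hmem0 : ∀ x : F2 n, x ∈ V' → ip γ x = 0 := by
    intro x hx
    have := hx.2
    simpa [LinearMap.mem_ker, ipL] using this
  set A : ℝ := ∑ x : F2 n, Set.indicator (V' : Set (F2 n)) (fun x => f (x + α)) x with hA
  set B : ℝ := ∑ x : F2 n, Set.indicator (V' : Set (F2 n)) (fun x => f (x + v₁ + α)) x with hB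
  set P : ℝ := ∑ x : F2 n, Set.indicator (V : Set (F2 n)) (fun x => f (x + α)) x with hPdef
  set Q : ℝ := ∑ x : F2 n, Set.indicator (V : Set (F2 n)) (fun x => f (x + α) * chi γ x) x with hQdef
  have hP : P = A + B := by
    have := sum_split V γ v₁ hv₁ h1 (fun x => f (x + α))
    simpa [hPdef, hA, hB, hV'] using this
  have hQ : Q = A - B := by
    have h := sum_split V γ v₁ hv₁ h1 (fun x => f (x + α) * chi γ x)
    have e1 : ∑ x : F2 n, Set.indicator (V' : Set (F2 n)) (fun x => f (x + α) * chi γ x) x = A := by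
      refine Finset.sum_congr rfl fun x _ => ?_
      by_cases hx : x ∈ (V' : Set (F2 n))
      · rw [Set.indicator_of_mem hx, Set.indicator_of_mem hx,
          chi_of_ip_zero (hmem0 x hx), mul_one]
      · rw [Set.indicator_of_notMem hx, Set.indicator_of_notMem hx]
    have e2 : ∑ x : F2 n, Set.indicator (V' : Set (F2 n)) (fun x => f (x + v₁ + α) * chi γ (x + v₁)) x = -B := by
      rw [hB, ← Finset.sum_neg_distrib]
      refine Finset.sum_congr rfl fun x _ => ?_
      by_cases hx : x ∈ (V' : Set (F2 n))
      · have hip : ip γ (x + v₁) = 1 := by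
          rw [ip_add_right, hmem0 x hx, h1, zero_add]
        rw [Set.indicator_of_mem hx, Set.indicator_of_mem hx, chi_of_ip_one hip]
        ring
      · rw [Set.indicator_of_notMem hx, Set.indicator_of_notMem hx, neg_zero]
    calc Q = _ := h
    _ = A - B := by rw [e1, e2]; ring
  have hc' : (0:ℝ) < (Nat.card V' : ℝ) := by exact_mod_cast card_pos V'
  have hcc : ((Nat.card V : ℝ)) = 2 * (Nat.card V' : ℝ) := by
    exact_mod_cast card_split V γ v₁ hv₁ h1
  have hrc0 : restrictCoeff f V α 0 = P / Nat.card V := rc_zero_eq f V α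
  have hrcγ : restrictCoeff f V α γ = Q / Nat.card V := rfl
  constructor
  · have hAeq : restrictCoeff f V' α 0 = A / Nat.card V' := rc_zero_eq f V' α
    rw [hAeq, hrc0, hrcγ, hcc]
    field_simp
    rw [hP, hQ]
    ring
  · have hBeq : restrictCoeff f V' (α + v₁) 0 = B / Nat.card V' := by
      rw [rc_zero_eq]
      congr 1
      refine Finset.sum_congr rfl fun x _ => ?_
      have : (fun x => f (x + (α + v₁))) = fun x => f (x + v₁ + α) := by
        funext y; rw [add_comm α v₁, ← add_assoc]
      rw [this]
    rw [hBeq, hrc0, hrcγ, hcc]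
    field_simp
    rw [hP, hQ]
    ring

lemma rc_abs_le_one (f : F2 n → ℝ) (hbd : ∀ x, f x ∈ Set.Icc (-1 : ℝ) 1)
    (V : Submodule (ZMod 2) (F2 n)) (α : F2 n) :
    |restrictCoeff f V α 0| ≤ 1 := by
  classical
  rw [rc_zero_eq]
  have hc : (0:ℝ) < (Nat.card V : ℝ) := by exact_mod_cast card_pos V
  rw [abs_div, abs_of_pos hc, div_le_one hc]
  calc |∑ x : F2 n, Set.indicator (V : Set (F2 n)) (fun x => f (x + α)) x|
      ≤ ∑ x : F2 n, |Set.indicator (V : Set (F2 n)) (fun x => f (x + α)) x| :=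
        Finset.abs_sum_le_sum_abs _ _
    _ ≤ ∑ x : F2 n, Set.indicator (V : Set (F2 n)) (fun _ => (1:ℝ)) x := by
        refine Finset.sum_le_sum fun x _ => ?_
        by_cases hx : x ∈ (V : Set (F2 n))
        · rw [Set.indicator_of_mem hx, Set.indicator_of_mem hx]
          exact abs_le.mpr ⟨(hbd _).1, (hbd _).2⟩
        · rw [Set.indicator_of_notMem hx, Set.indicator_of_notMem hx, abs_zero]
    _ = (Nat.card V : ℝ) := (card_eq_sum_indicator V).symm

lemma abs_max_split (M Q : ℝ) : |M| + |Q| ≤ |M + Q| ∨ |M| + |Q| ≤ |M - Q| := by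
  rcases le_total 0 M with hM | hM <;> rcases le_total 0 Q with hQ | hQ
  · left; rw [abs_of_nonneg hM, abs_of_nonneg hQ, abs_of_nonneg (by linarith)]
  · right; rw [abs_of_nonneg hM, abs_of_nonpos hQ, abs_of_nonneg (by linarith)]; linarith
  · right; rw [abs_of_nonpos hM, abs_of_nonneg hQ, abs_of_nonpos (by linarith)]; linarith
  · left; rw [abs_of_nonpos hM, abs_of_nonpos hQ, abs_of_nonpos (by linarith)]; linarith

end Aux4
section Aux5
variable {n : ℕ}

lemma key_induction (f : F2 n → ℝ) (δ : ℝ) (hδ : 0 < δ) :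
    ∀ (k : ℕ) (V : Submodule (ZMod 2) (F2 n)) (α : F2 n), Module.finrank (ZMod 2) V = k →
    ∃ (V' : Submodule (ZMod 2) (F2 n)) (α' : F2 n),
      IsDeltaRegular f V' α' δ ∧
      Module.finrank (ZMod 2) V' ≤ Module.finrank (ZMod 2) V ∧
      |restrictCoeff f V α 0|
        + δ * ((Module.finrank (ZMod 2) V : ℝ) - (Module.finrank (ZMod 2) V' : ℝ))
        ≤ |restrictCoeff f V' α' 0| := by
  intro k
  induction k using Nat.strong_induction_on with
  | _ k ih =>
    intro V α hk
    by_cases hreg : IsDeltaRegular f V α δ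
    · exact ⟨V, α, hreg, le_rfl, by simp⟩
    · rw [IsDeltaRegular] at hreg
      push_neg at hreg
      obtain ⟨W, hW, γ, hγW, hγ0, hbig⟩ := hreg
      -- γ ∉ perp V
      have hγp : γ ∉ perp V := by
        intro hp
        have : γ ∈ W ⊓ perp V := ⟨hγW, hp⟩
        rw [hW.inf_eq_bot] at this
        exact hγ0 this
      have hex : ∃ v ∈ V, ip γ v = 1 := by
        by_contra hc
        push_neg at hc
        apply hγp
        intro v hv
        rcases zmod2_cases (ip γ v) with h | h
        · exact h
        · exact absurd h (hc v hv)
      obtain ⟨v₁, hv₁, h1⟩ := hex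
      set V₁ : Submodule (ZMod 2) (F2 n) := V ⊓ LinearMap.ker (ipL γ) with hV₁
      have hfr : Module.finrank (ZMod 2) V = Module.finrank (ZMod 2) V₁ + 1 :=
        finrank_split V γ v₁ hv₁ h1
      obtain ⟨hplus, hminus⟩ := rc_split f V α γ v₁ hv₁ h1
      set M := restrictCoeff f V α 0 with hM
      set Q := restrictCoeff f V α γ with hQ
      -- choose the coset with larger average
      have hδQ : δ < |Q| := hbig
      obtain ⟨α₁, hα₁⟩ : ∃ α₁ : F2 n, |M| + δ < |restrictCoeff f V₁ α₁ 0| := by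
        rcases abs_max_split M Q with h | h
        · exact ⟨α, by rw [hplus]; linarith⟩
        · exact ⟨α + v₁, by rw [hminus]; linarith⟩
      have hk1 : Module.finrank (ZMod 2) V₁ < k := by omega
      obtain ⟨V', α', hreg', hle', hbnd'⟩ := ih _ hk1 V₁ α₁ rfl
      refine ⟨V', α', hreg', by omega, ?_⟩
      have hcast : (Module.finrank (ZMod 2) V : ℝ) = (Module.finrank (ZMod 2) V₁ : ℝ) + 1 := by
        exact_mod_cast hfr
      rw [hcast]
      nlinarith [hbnd', hα₁]

end Aux5
/-- Folklore: r(f,δ) ≤ 1/δ. -/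
theorem regularity_codim_le_inv_delta (n : ℕ) (f : F2 n → ℝ)
    (hbd : ∀ x, f x ∈ Set.Icc (-1 : ℝ) 1) (δ : ℝ) (hδ : 0 < δ) :
    ∃ (V : Submodule (ZMod 2) (F2 n)) (α : F2 n),
      ((n - Module.finrank (ZMod 2) V : ℕ) : ℝ) ≤ 1 / δ ∧ IsDeltaRegular f V α δ := by
  obtain ⟨V', α', hreg, hle, hbnd⟩ :=
    key_induction f δ hδ (Module.finrank (ZMod 2) (⊤ : Submodule (ZMod 2) (F2 n))) ⊤ 0 rfl
  have htop : Module.finrank (ZMod 2) (⊤ : Submodule (ZMod 2) (F2 n)) = n := by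
    rw [finrank_top]
    simp [Module.finrank_pi]
  refine ⟨V', α', ?_, hreg⟩
  have h1 : |restrictCoeff f V' α' 0| ≤ 1 := rc_abs_le_one f hbd V' α'
  have h0 : (0:ℝ) ≤ |restrictCoeff f (⊤ : Submodule (ZMod 2) (F2 n)) 0 0| := abs_nonneg _
  rw [htop] at hbnd hle
  have hd : δ * ((n:ℝ) - (Module.finrank (ZMod 2) V' : ℝ)) ≤ 1 := by linarith
  have hcast : ((n - Module.finrank (ZMod 2) V' : ℕ) : ℝ)
      = (n:ℝ) - (Module.finrank (ZMod 2) V' : ℝ) := by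
    rw [Nat.cast_sub hle]
  rw [hcast, le_div_iff₀ hδ]
  linarith [mul_comm δ ((n:ℝ) - (Module.finrank (ZMod 2) V' : ℝ))]
end

section
/- There exist a constant c > 0 and an integer n₀ such that for every odd n ≥ n₀ and every affine subspace 𝒰 = α + 𝒱 of 𝔽₂ⁿ with codim(𝒱) ≤ √n/(10e) − 1, the restriction (MAJₙ)_𝒰 has a nonzero Fourier coefficient of magnitude at least c · n^{−1/2}. Consequently, for every δ ≤ c · n^{−1/2}, every affine subspace of 𝔽₂ⁿ on which MAJₙ is δ-regular has codimension greater than √n/(10e) − 1. -/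
open Finset

/-- The majority function on n (odd) bits, as a ±1-valued function:
+1 if fewer than n/2 coordinates equal 1, and −1 otherwise. -/
noncomputable def majF (n : ℕ) : F2 n → ℝ :=
  fun x => if 2 * (Finset.univ.filter (fun i => x i = 1)).card < n then 1 else -1

-- ### auxiliary lemmas

section Aux
open Module

lemma mem_perp_iff {n : ℕ} (V : Submodule (ZMod 2) (F2 n)) (γ : F2 n) :
    γ ∈ perp V ↔ ∀ v ∈ V, ip γ v = 0 := Iff.rfl

lemma ip_add_left {n : ℕ} (a b x : F2 n) : ip (a + b) x = ip a x + ip b x := by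
  simp [ip, add_mul, Finset.sum_add_distrib]

lemma ip_single {n : ℕ} (i : Fin n) (v : F2 n) : ip (Pi.single i 1) v = v i := by
  simp only [ip, Pi.single_apply]
  rw [Finset.sum_congr rfl (fun j _ => by
    rw [ite_mul, one_mul, zero_mul] :
      ∀ j ∈ univ, (if j = i then (1:ZMod 2) else 0) * v j = if j = i then v j else 0)]
  simp

noncomputable def eps (b : ZMod 2) : ℝ := 1 - 2 * (b.val : ℝ)

lemma zmod2_cases_s16 : ∀ b : ZMod 2, b = 0 ∨ b = 1 := by decide

lemma eps_zero : eps 0 = 1 := by simp [eps]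
lemma eps_one : eps 1 = -1 := by rw [eps, show (1 : ZMod 2).val = 1 from rfl]; norm_num
lemma sumZMod (g : ZMod 2 → ℝ) : ∑ b : ZMod 2, g b = g 0 + g 1 := by
  rw [show (univ : Finset (ZMod 2)) = {0, 1} by decide]
  simp
lemma abs_eps (b : ZMod 2) : |eps b| = 1 := by
  rcases zmod2_cases_s16 b with h | h <;> subst h <;> simp [eps_zero, eps_one]
lemma eps_add (a b : ZMod 2) : eps (a + b) = eps a * eps b := by
  rcases zmod2_cases_s16 a with h | h <;> rcases zmod2_cases_s16 b with h' | h' <;> subst h <;> subst h' <;>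
    simp [eps_zero, eps_one, show (1 + 1 : ZMod 2) = 0 by decide]
lemma eps_eq_pow (b : ZMod 2) : eps b = (-1 : ℝ) ^ b.val := by
  rcases zmod2_cases_s16 b with h | h <;> subst h <;>
    simp [eps_zero, eps_one, show (1 : ZMod 2).val = 1 from rfl]

lemma chi_eq_eps {n : ℕ} (γ x : F2 n) : chi γ x = eps (ip γ x) := by
  rw [chi, eps_eq_pow]

noncomputable def radSum {ι : Type*} [Fintype ι] (y : ι → ZMod 2) : ℝ := ∑ i, eps (y i)

lemma radSum_cons (N : ℕ) (b : ZMod 2) (y : Fin N → ZMod 2) :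
    radSum (Fin.cons b y) = eps b + radSum y := by
  simp [radSum, Fin.sum_univ_succ]

lemma sum_pi_succ (N : ℕ) (F : (Fin (N+1) → ZMod 2) → ℝ) :
    ∑ y : Fin (N+1) → ZMod 2, F y
      = ∑ p : ZMod 2 × (Fin N → ZMod 2), F (Fin.cons p.1 p.2) := by
  exact (Fintype.sum_equiv ((Fin.consEquiv (fun _ => ZMod 2))) _ _ (fun p => rfl)).symm

lemma moment2 (N : ℕ) : ∑ y : Fin N → ZMod 2, (radSum y) ^ 2 = N * 2 ^ N := by
  induction N with
  | zero => simp [radSum]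
  | succ N ih =>
      rw [sum_pi_succ, Fintype.sum_prod_type_right]
      have : ∀ y : Fin N → ZMod 2, ∑ b : ZMod 2, radSum (Fin.cons b y) ^ 2
          = 2 * radSum y ^ 2 + 2 := by
        intro y
        rw [sumZMod]
        simp only [radSum_cons, eps_zero, eps_one]
        ring
      rw [Finset.sum_congr rfl (fun y _ => this y), Finset.sum_add_distrib,
        Finset.sum_const, ← Finset.mul_sum, ih]
      have hc : (Finset.univ : Finset (Fin N → ZMod 2)).card = 2 ^ N := by
        simp [Finset.card_univ]
      rw [hc]
      rw [nsmul_eq_mul]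
      push_cast
      ring

lemma moment4 (N : ℕ) : ∑ y : Fin N → ZMod 2, (radSum y) ^ 4 ≤ 3 * N ^ 2 * 2 ^ N := by
  induction N with
  | zero => simp [radSum]
  | succ N ih =>
      rw [sum_pi_succ, Fintype.sum_prod_type_right]
      have : ∀ y : Fin N → ZMod 2, ∑ b : ZMod 2, radSum (Fin.cons b y) ^ 4
          = 2 * radSum y ^ 4 + 12 * radSum y ^ 2 + 2 := by
        intro y
        rw [sumZMod]
        simp only [radSum_cons, eps_zero, eps_one]
        ring
      rw [Finset.sum_congr rfl (fun y _ => this y)]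
      rw [Finset.sum_add_distrib, Finset.sum_add_distrib, Finset.sum_const,
        ← Finset.mul_sum, ← Finset.mul_sum, moment2]
      have hc : (Finset.univ : Finset (Fin N → ZMod 2)).card = 2 ^ N := by
        simp [Finset.card_univ]
      rw [hc]
      have h2 : (0:ℝ) < 2 ^ N := by positivity
      rw [nsmul_eq_mul, show (2:ℝ)^(N+1) = 2^N*2 from pow_succ 2 N]
      push_cast
      nlinarith [ih, h2, Nat.cast_nonneg (α := ℝ) N]

lemma absMoment (N : ℕ) :
    (2:ℝ)^N * Real.sqrt ((N:ℝ)/3) ≤ ∑ y : Fin N → ZMod 2, |radSum y| := by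
  rcases Nat.eq_zero_or_pos N with h | hN
  · subst h
    simp only [Nat.cast_zero, zero_div, Real.sqrt_zero, mul_zero]
    exact Finset.sum_nonneg fun y _ => abs_nonneg _
  set P := ∑ y : Fin N → ZMod 2, |radSum y| with hP
  set S := ∑ y : Fin N → ZMod 2, (radSum y)^2 * |radSum y| with hS
  have hQ : ∑ y : Fin N → ZMod 2, (radSum y)^2 = (N:ℝ) * 2^N := moment2 N
  have hR4 := moment4 N
  have hPnn : 0 ≤ P := Finset.sum_nonneg fun y _ => abs_nonneg _
  have hSnn : 0 ≤ S := Finset.sum_nonneg fun y _ =>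
    mul_nonneg (sq_nonneg _) (abs_nonneg _)
  have hRnn : 0 ≤ ∑ y : Fin N → ZMod 2, (radSum y)^4 :=
    Finset.sum_nonneg fun y _ => by positivity
  have CS1 : ((N:ℝ) * 2^N)^2 ≤ P * S := by
    rw [← hQ]
    have key := Finset.sum_mul_sq_le_sq_mul_sq Finset.univ
      (fun y : Fin N → ZMod 2 => Real.sqrt |radSum y|)
      (fun y : Fin N → ZMod 2 => |radSum y| * Real.sqrt |radSum y|)
    have e1 : ∀ y : Fin N → ZMod 2,
        Real.sqrt |radSum y| * (|radSum y| * Real.sqrt |radSum y|) = (radSum y)^2 := by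
      intro y
      rw [show Real.sqrt |radSum y| * (|radSum y| * Real.sqrt |radSum y|)
          = (Real.sqrt |radSum y| * Real.sqrt |radSum y|) * |radSum y| by ring,
        Real.mul_self_sqrt (abs_nonneg _), ← sq_abs]
      ring
    have e2 : ∀ y : Fin N → ZMod 2, (Real.sqrt |radSum y|)^2 = |radSum y| := fun y =>
      Real.sq_sqrt (abs_nonneg _)
    have e3 : ∀ y : Fin N → ZMod 2,
        (|radSum y| * Real.sqrt |radSum y|)^2 = (radSum y)^2 * |radSum y| := by
      intro y
      rw [mul_pow, Real.sq_sqrt (abs_nonneg _), sq_abs]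
    calc (∑ y : Fin N → ZMod 2, (radSum y)^2)^2
        = (∑ y : Fin N → ZMod 2, Real.sqrt |radSum y| *
            (|radSum y| * Real.sqrt |radSum y|))^2 := by
          rw [Finset.sum_congr rfl fun y _ => (e1 y)]
      _ ≤ (∑ y : Fin N → ZMod 2, (Real.sqrt |radSum y|)^2) *
            (∑ y : Fin N → ZMod 2, (|radSum y| * Real.sqrt |radSum y|)^2) := key
      _ = P * S := by
          rw [Finset.sum_congr rfl fun y _ => (e2 y), Finset.sum_congr rfl fun y _ => (e3 y)]
  have CS2 : S^2 ≤ ((N:ℝ) * 2^N) * ∑ y : Fin N → ZMod 2, (radSum y)^4 := by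
    rw [← hQ]
    have key := Finset.sum_mul_sq_le_sq_mul_sq Finset.univ
      (fun y : Fin N → ZMod 2 => |radSum y|)
      (fun y : Fin N → ZMod 2 => (radSum y)^2)
    have e1 : ∀ y : Fin N → ZMod 2, |radSum y| * (radSum y)^2 = (radSum y)^2 * |radSum y| :=
      fun y => mul_comm _ _
    have e2 : ∀ y : Fin N → ZMod 2, |radSum y|^2 = (radSum y)^2 := fun y => sq_abs _
    calc S^2 = (∑ y : Fin N → ZMod 2, |radSum y| * (radSum y)^2)^2 := by
          rw [hS, Finset.sum_congr rfl fun y _ => (e1 y).symm]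
      _ ≤ _ := key
      _ = _ := by
          rw [Finset.sum_congr rfl fun y _ => (e2 y),
            Finset.sum_congr rfl (fun y _ => by ring :
              ∀ y ∈ Finset.univ, ((radSum y : ℝ)^2)^2 = (radSum y)^4)]
  have hp : (0:ℝ) < 2^N := by positivity
  have hNr : (1:ℝ) ≤ N := by exact_mod_cast hN
  have hQpos : (0:ℝ) < (N:ℝ) * 2^N := by positivity
  have key : ((N:ℝ) * 2^N)^3 ≤ P^2 * ∑ y : Fin N → ZMod 2, (radSum y)^4 := by
    nlinarith [CS1, CS2, hPnn, hSnn, hQpos, sq_nonneg P, sq_nonneg S, mul_nonneg hPnn hSnn]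
  have hpos : (0:ℝ) < 3*(N:ℝ)^2*2^N := by positivity
  have h1 : P^2 * (∑ y : Fin N → ZMod 2, (radSum y)^4) ≤ P^2 * (3*(N:ℝ)^2*2^N) :=
    mul_le_mul_of_nonneg_left hR4 (sq_nonneg P)
  have h3 : ((N:ℝ) * 2^N)^3 ≤ P^2 * (3*(N:ℝ)^2*2^N) := key.trans h1
  have hP2 : (N:ℝ)/3 * (2^N)^2 ≤ P^2 := by
    rw [← mul_le_mul_iff_of_pos_right hpos]
    calc (N:ℝ)/3 * (2^N)^2 * (3*(N:ℝ)^2*2^N) = ((N:ℝ) * 2^N)^3 := by ring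
      _ ≤ P^2 * (3*(N:ℝ)^2*2^N) := h3
  calc (2:ℝ)^N * Real.sqrt ((N:ℝ)/3)
      = Real.sqrt ((N:ℝ)/3 * (2^N)^2) := by
        rw [Real.sqrt_mul (by positivity) ((2^N)^2), Real.sqrt_sq (by positivity)]
        ring
    _ ≤ Real.sqrt (P^2) := Real.sqrt_le_sqrt hP2
    _ = P := Real.sqrt_sq hPnn

lemma exists_infoSet {n : ℕ} (V : Submodule (ZMod 2) (F2 n)) :
    ∃ I : Finset (Fin n), I.card = finrank (ZMod 2) V ∧
      Function.Bijective (fun (v : V) (i : I) => (v : F2 n) (i : Fin n)) := by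
  classical
  set φ : Fin n → Module.Dual (ZMod 2) V :=
    fun i => (LinearMap.proj i).comp V.subtype with hφ
  have hspan : Submodule.span (ZMod 2) (Set.range φ) = ⊤ := by
    have hcoann : (Submodule.span (ZMod 2) (Set.range φ)).dualCoannihilator = ⊥ := by
      rw [Submodule.eq_bot_iff]
      intro v hv
      rw [Submodule.mem_dualCoannihilator] at hv
      have : ∀ i, φ i v = 0 := fun i =>
        hv (φ i) (Submodule.subset_span (Set.mem_range_self i))
      ext i
      exact this i
    have hfr := Subspace.finrank_add_finrank_dualCoannihilator_eq
      (Submodule.span (ZMod 2) (Set.range φ))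
    rw [hcoann, finrank_bot, add_zero] at hfr
    exact Submodule.eq_top_of_finrank_eq
      (hfr.trans (Subspace.dual_finrank_eq (K := ZMod 2) (V := V)).symm)
  obtain ⟨b, hbsub, hbspan, hbind⟩ :=
    exists_linearIndependent (ZMod 2) (Set.range φ)
  rw [hspan] at hbspan
  have hbfin : b.Finite := hbind.setFinite
  haveI : Fintype b := hbfin.fintype
  have hcard : b.toFinset.card = finrank (ZMod 2) V := by
    have := finrank_span_set_eq_card hbind
    rw [hbspan, finrank_top, Subspace.dual_finrank_eq] at this
    exact this.symm
  have hpick : ∀ p : {f // f ∈ b.toFinset}, ∃ i, φ i = p.1 := fun p =>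
    hbsub (Set.mem_toFinset.mp p.2)
  set pick : {f // f ∈ b.toFinset} → Fin n := fun p => (hpick p).choose with hpickdef
  have hpickspec : ∀ p, φ (pick p) = p.1 := fun p => (hpick p).choose_spec
  set I : Finset (Fin n) := b.toFinset.attach.image pick with hI
  have hpickinj : Function.Injective pick := by
    intro p q hpq
    have : p.1 = q.1 := by rw [← hpickspec p, ← hpickspec q, hpq]
    exact Subtype.ext this
  have hIcard : I.card = finrank (ZMod 2) V := by
    rw [hI, Finset.card_image_of_injective _ hpickinj, Finset.card_attach, hcard]
  refine ⟨I, hIcard, ?_⟩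
  have hinj : Function.Injective (fun (v : V) (i : I) => (v : F2 n) (i : Fin n)) := by
    intro v w hvw
    have hcoord : ∀ i ∈ I, (v : F2 n) i = (w : F2 n) i := by
      intro i hi
      exact congrFun hvw ⟨i, hi⟩
    have hb0 : ∀ f ∈ b, f (v - w) = 0 := by
      intro f hf
      set p : {f // f ∈ b.toFinset} := ⟨f, Set.mem_toFinset.mpr hf⟩ with hp
      have hσI : pick p ∈ I := by
        rw [hI]
        exact Finset.mem_image_of_mem pick (Finset.mem_attach _ p)
      have hc := hcoord (pick p) hσI
      have : φ (pick p) (v - w) = 0 := by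
        simp only [hφ, LinearMap.comp_apply, LinearMap.proj_apply, Submodule.subtype_apply]
        rw [Submodule.coe_sub]
        simp only [Pi.sub_apply]
        rw [hc, sub_self]
      rwa [hpickspec p] at this
    have hall : ∀ f : Module.Dual (ZMod 2) V, f (v - w) = 0 := by
      intro f
      have hf : f ∈ Submodule.span (ZMod 2) b := by rw [hbspan]; trivial
      induction hf using Submodule.span_induction with
      | mem g hg => exact hb0 g hg
      | zero => simp
      | add g h _ _ hg hh => simp [hg, hh]
      | smul c g _ hg => simp [hg]
    have : v - w = 0 := by
      ext i
      have := hall ((LinearMap.proj i).comp V.subtype)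
      simpa using this
    exact sub_eq_zero.mp this
  rw [Fintype.bijective_iff_injective_and_card]
  refine ⟨hinj, ?_⟩
  rw [card_eq_pow_finrank (K := ZMod 2) (V := V), Fintype.card_fun, ZMod.card,
    Fintype.card_coe, hIcard]

-- weight lemmas
def wt {n : ℕ} (x : F2 n) : ℕ := (Finset.univ.filter (fun i => x i = 1)).card

lemma majF_eq {n : ℕ} (x : F2 n) : majF n x = if 2 * wt x < n then 1 else -1 := rfl

lemma abs_majF {n : ℕ} (x : F2 n) : |majF n x| = 1 := by
  rw [majF_eq]
  split <;> simp

lemma sum_eps_eq {n : ℕ} (x : F2 n) : ∑ i, eps (x i) = (n:ℝ) - 2 * wt x := by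
  have h1 : ∀ i : Fin n, eps (x i) = 1 - 2 * (if x i = 1 then (1:ℝ) else 0) := by
    intro i
    rcases zmod2_cases_s16 (x i) with h | h <;> rw [h] <;>
      simp [eps_zero, eps_one, show (0 : ZMod 2) ≠ 1 by decide] <;> norm_num
  rw [Finset.sum_congr rfl (fun i _ => h1 i), Finset.sum_sub_distrib, Finset.sum_const,
    ← Finset.mul_sum, Finset.sum_boole, wt]
  simp [Finset.card_univ]

lemma majF_mul {n : ℕ} (hodd : Odd n) (x : F2 n) :
    majF n x * ((n:ℝ) - 2 * wt x) = |(n:ℝ) - 2 * wt x| := by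
  rw [majF_eq]
  by_cases h : 2 * wt x < n
  · rw [if_pos h, one_mul, abs_of_pos]
    have : (2 * wt x : ℝ) < n := by exact_mod_cast h
    push_cast at this ⊢
    linarith
  · rw [if_neg h]
    have hne : 2 * wt x ≠ n := by
      intro hc
      have h2 := Nat.odd_iff.mp hodd
      omega
    have hlt : n < 2 * wt x := by omega
    have : (n:ℝ) < 2 * wt x := by exact_mod_cast hlt
    rw [abs_of_neg (by push_cast at this ⊢ ; linarith)]
    ring

lemma restrictCoeff_eq {n : ℕ} [Fintype V'] (f : F2 n → ℝ) (V : Submodule (ZMod 2) (F2 n))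
    (α γ : F2 n) : True := trivial

end Aux

section Main
open Module

lemma ip_zero_left {n : ℕ} (x : F2 n) : ip 0 x = 0 := by simp [ip]

set_option maxHeartbeats 800000 in
lemma restrictCoeff_eq' {n : ℕ} (f : F2 n → ℝ) (V : Submodule (ZMod 2) (F2 n))
    [Fintype V] (α γ : F2 n) :
    restrictCoeff f V α γ = (∑ x : V, f ((x : F2 n) + α) * chi γ (x : F2 n)) / (Nat.card V) := by
  classical
  rw [restrictCoeff]
  congr 1
  have h1 : ∀ x : F2 n, Set.indicator (V : Set (F2 n)) (fun x => f (x + α) * chi γ x) x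
      = if x ∈ V then f (x + α) * chi γ x else 0 := fun x => rfl
  rw [Finset.sum_congr rfl (fun x _ => h1 x), ← Finset.sum_filter]
  exact Finset.sum_subtype _ (fun x => by simp) (fun x => f (x + α) * chi γ x)

set_option maxHeartbeats 2000000 in
theorem majority_lb_main (n : ℕ) (hn : 1 ≤ n) (hodd : Odd n)
    (V : Submodule (ZMod 2) (F2 n)) (α : F2 n)
    (hcodim : ((n - Module.finrank (ZMod 2) V : ℕ) : ℝ) ≤
      Real.sqrt n / (10 * Real.exp 1) - 1)
    (W : Submodule (ZMod 2) (F2 n)) (hW : IsCompl W (perp V)) :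
    ∃ γ ∈ W, γ ≠ 0 ∧ (1/4 : ℝ) * (n : ℝ) ^ (-(1:ℝ)/2) ≤ |restrictCoeff (majF n) V α γ| := by
  classical
  set m := Module.finrank (ZMod 2) V with hm
  have hmn : m ≤ n := by
    have h := Submodule.finrank_le V
    rwa [Module.finrank_fintype_fun_eq_card, Fintype.card_fin] at h
  set k := n - m with hkdef
  have hnR : (1:ℝ) ≤ (n:ℝ) := by exact_mod_cast hn
  have hnpos : (0:ℝ) < n := by linarith
  have hsqrt_pos : 0 < Real.sqrt n := Real.sqrt_pos.mpr hnpos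
  have hkR : (k:ℝ) ≤ Real.sqrt n / 10 := by
    have he1 : (1:ℝ) ≤ Real.exp 1 := by
      have := Real.add_one_le_exp (1:ℝ); linarith
    have h10 : Real.sqrt n / (10 * Real.exp 1) ≤ Real.sqrt n / 10 :=
      div_le_div_of_nonneg_left hsqrt_pos.le (by norm_num) (by nlinarith)
    calc (k:ℝ) ≤ Real.sqrt n / (10 * Real.exp 1) - 1 := hcodim
      _ ≤ Real.sqrt n / 10 := by linarith
  have hsqrt_le : Real.sqrt n ≤ n := by
    calc Real.sqrt n ≤ Real.sqrt ((n:ℝ)^2) := Real.sqrt_le_sqrt (by nlinarith)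
      _ = n := Real.sqrt_sq (by linarith)
  have hmR : ((m:ℕ):ℝ) = (n:ℝ) - k := by
    have hkn' : k ≤ n := by omega
    have : m = n - k := by omega
    rw [this, Nat.cast_sub hkn']
  have hm9 : (9/10:ℝ) * n ≤ (m:ℝ) := by
    rw [hmR]
    have : (k:ℝ) ≤ (n:ℝ)/10 := by linarith
    linarith
  obtain ⟨I, hIcard, hIbij⟩ := exists_infoSet V
  set q : ℝ := 2 ^ m with hqdef
  have hq_pos : (0:ℝ) < q := by positivity
  have hcardV' : ((Fintype.card V : ℕ) : ℝ) = q := by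
    rw [card_eq_pow_finrank (K := ZMod 2) (V := V), ZMod.card]
    push_cast
    rfl
  have hcardV : ((Nat.card V : ℕ) : ℝ) = q := by
    rw [Nat.card_eq_fintype_card]; exact hcardV'
  set g : V → ℝ := fun x => majF n ((x:F2 n) + α) with hg
  set A : Fin n → ℝ := fun i => ∑ x : V, g x * eps (((x:F2 n) + α) i) with hA
  have hsum : ∑ i, A i = ∑ x : V, |(n:ℝ) - 2 * wt ((x:F2 n) + α)| := by
    rw [hA, Finset.sum_comm]
    refine Finset.sum_congr rfl fun x _ => ?_
    rw [← Finset.mul_sum, sum_eps_eq, majF_mul hodd]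
  have hcomplI : (((Iᶜ : Finset (Fin n)).card : ℕ) : ℝ) = k := by
    rw [Finset.card_compl, hIcard, Fintype.card_fin]
  have hpoint : ∀ x : V,
      |∑ i ∈ I, eps (((x:F2 n) + α) i)| - k ≤ |(n:ℝ) - 2 * wt ((x:F2 n) + α)| := by
    intro x
    have hsplit : ((n:ℝ) - 2 * wt ((x:F2 n) + α))
        = ∑ i ∈ I, eps (((x:F2 n) + α) i) + ∑ i ∈ Iᶜ, eps (((x:F2 n) + α) i) := by
      rw [← sum_eps_eq ((x:F2 n) + α)]
      exact (Finset.sum_add_sum_compl I _).symm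
    have habs : |∑ i ∈ Iᶜ, eps (((x:F2 n) + α) i)| ≤ (k:ℝ) := by
      calc |∑ i ∈ Iᶜ, eps (((x:F2 n) + α) i)| ≤ ∑ i ∈ Iᶜ, |eps (((x:F2 n) + α) i)| :=
            Finset.abs_sum_le_sum_abs _ _
        _ = ∑ _i ∈ Iᶜ, (1:ℝ) := Finset.sum_congr rfl (fun i _ => abs_eps _)
        _ = ((Iᶜ.card : ℕ) : ℝ) := by rw [Finset.sum_const, nsmul_eq_mul, mul_one]
        _ = k := hcomplI
    have htri : |∑ i ∈ I, eps (((x:F2 n) + α) i)|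
        ≤ |(n:ℝ) - 2 * wt ((x:F2 n) + α)| + |∑ i ∈ Iᶜ, eps (((x:F2 n) + α) i)| := by
      calc |∑ i ∈ I, eps (((x:F2 n) + α) i)|
          = |((n:ℝ) - 2 * wt ((x:F2 n) + α)) - ∑ i ∈ Iᶜ, eps (((x:F2 n) + α) i)| := by
            rw [hsplit]; ring_nf
        _ ≤ _ := abs_sub _ _
    linarith
  have hcV : ((Fintype.card V : ℕ) : ℝ) = q := hcardV'
  have hT1 : (∑ x : V, |∑ i ∈ I, eps (((x:F2 n) + α) i)|) - q * k
      ≤ ∑ x : V, |(n:ℝ) - 2 * wt ((x:F2 n) + α)| := by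
    have h := Finset.sum_le_sum (fun x (_ : x ∈ (Finset.univ : Finset V)) => hpoint x)
    rw [Finset.sum_sub_distrib, Finset.sum_const, nsmul_eq_mul, Finset.card_univ] at h
    calc (∑ x : V, |∑ i ∈ I, eps (((x:F2 n) + α) i)|) - q * k
        = (∑ x : V, |∑ i ∈ I, eps (((x:F2 n) + α) i)|) - ((Fintype.card V : ℕ):ℝ) * k := by
          rw [hcV]
      _ ≤ _ := h
  have hconv : ∑ x : V, |∑ i ∈ I, eps (((x:F2 n) + α) i)|
      = ∑ y : Fin m → ZMod 2, |radSum y| := by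
    set F : V → ({ i // i ∈ I } → ZMod 2) := fun x i => ((x:F2 n) + α) (i : Fin n) with hF
    have hFbij : Function.Bijective F := by
      have h2 : F = (fun u : { i // i ∈ I } → ZMod 2 =>
          u + (fun i : {i // i ∈ I} => α (i : Fin n)))
            ∘ (fun (v : V) (i : I) => (v : F2 n) (i : Fin n)) := by
        funext x i
        simp [hF]
      rw [h2]
      exact (Equiv.addRight _).bijective.comp hIbij
    have h3 : ∀ x : V, |∑ i ∈ I, eps (((x:F2 n) + α) i)| = |radSum (F x)| := by
      intro x
      congr 1
      rw [radSum, ← Finset.sum_coe_sort I (fun i => eps (((x:F2 n) + α) i))]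
    rw [Finset.sum_congr rfl (fun x _ => h3 x)]
    have e : {i // i ∈ I} ≃ Fin m := Fintype.equivFinOfCardEq (by
      rw [Fintype.card_coe, hIcard])
    have hb1 : ∑ x : V, |radSum (F x)| = ∑ y : { i // i ∈ I } → ZMod 2, |radSum y| :=
      Fintype.sum_bijective F hFbij (fun x => |radSum (F x)|) (fun y => |radSum y|)
        (fun x => rfl)
    rw [hb1]
    exact Fintype.sum_equiv (Equiv.arrowCongr e (Equiv.refl _)) _ _ (fun y => by
      congr 1
      rw [radSum, radSum]
      exact Fintype.sum_equiv e (fun i => eps (y i))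
        (fun j => eps ((Equiv.arrowCongr e (Equiv.refl _)) y j)) (fun i => by
          simp [Equiv.arrowCongr])
      )
  have hsqm : (9/20:ℝ) * Real.sqrt n ≤ Real.sqrt ((m:ℝ)/3) := by
    have h1 : (9/20:ℝ)^2 * n ≤ (m:ℝ)/3 := by nlinarith [hm9]
    have h2 : Real.sqrt ((9/20:ℝ)^2 * n) = (9/20) * Real.sqrt n := by
      rw [Real.sqrt_mul (by positivity) _, Real.sqrt_sq (by norm_num)]
    rw [← h2]
    exact Real.sqrt_le_sqrt h1
  have hchain : q * (Real.sqrt n / 4) + q * k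
      ≤ ∑ x : V, |(n:ℝ) - 2 * wt ((x:F2 n) + α)| := by
    have h5 : Real.sqrt n/4 + 2*k ≤ Real.sqrt ((m:ℝ)/3) := by linarith
    have habs := absMoment m
    calc q * (Real.sqrt n/4) + q*k = q * (Real.sqrt n/4 + 2*k) - q*k := by ring
      _ ≤ q * Real.sqrt ((m:ℝ)/3) - q*k := by nlinarith [hq_pos, h5]
      _ ≤ (∑ y : Fin m → ZMod 2, |radSum y|) - q*k := by
          have : q * Real.sqrt ((m:ℝ)/3) ≤ ∑ y : Fin m → ZMod 2, |radSum y| := habs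
          linarith
      _ = (∑ x : V, |∑ i ∈ I, eps (((x:F2 n) + α) i)|) - q*k := by rw [hconv]
      _ ≤ _ := hT1
  set B : Finset (Fin n) := univ.filter (fun i => ∀ x ∈ V, x i = 0) with hB
  have hBcard : B.card ≤ k := by
    set ψ : V →ₗ[ZMod 2] ({i // i ∈ Bᶜ} → ZMod 2) :=
      LinearMap.pi (fun i : {i // i ∈ Bᶜ} =>
        (LinearMap.proj (i : Fin n)).comp V.subtype) with hψ
    have hψinj : Function.Injective ψ := by
      intro v w hvw
      have hco : ∀ i : Fin n, (v:F2 n) i = (w:F2 n) i := by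
        intro i
        by_cases hi : i ∈ B
        · rw [hB, Finset.mem_filter] at hi
          rw [hi.2 _ v.2, hi.2 _ w.2]
        · have hic : i ∈ Bᶜ := Finset.mem_compl.mpr hi
          exact congrFun hvw ⟨i, hic⟩
      exact Subtype.ext (funext hco)
    have hle := LinearMap.finrank_le_finrank_of_injective hψinj
    rw [Module.finrank_fintype_fun_eq_card, Fintype.card_coe] at hle
    have h7 : Bᶜ.card = n - B.card := by
      rw [Finset.card_compl, Fintype.card_fin]
    have h8 : B.card ≤ n := by
      calc B.card ≤ Fintype.card (Fin n) := Finset.card_le_univ B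
        _ = n := Fintype.card_fin n
    omega
  have hAbound : ∀ i : Fin n, |A i| ≤ q := by
    intro i
    calc |A i| ≤ ∑ x : V, |g x * eps (((x:F2 n) + α) i)| := Finset.abs_sum_le_sum_abs _ _
      _ = ∑ _x : V, (1:ℝ) := Finset.sum_congr rfl (fun x _ => by
          rw [abs_mul, abs_eps, mul_one, hg, abs_majF])
      _ = ((Fintype.card V : ℕ):ℝ) := by
          rw [Finset.sum_const, nsmul_eq_mul, mul_one, Finset.card_univ]
      _ = q := hcV
  have hBsum : |∑ i ∈ B, A i| ≤ q * k := by
    calc |∑ i ∈ B, A i| ≤ ∑ i ∈ B, |A i| := Finset.abs_sum_le_sum_abs _ _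
      _ ≤ ∑ _i ∈ B, q := Finset.sum_le_sum (fun i _ => hAbound i)
      _ = ((B.card:ℕ):ℝ) * q := by rw [Finset.sum_const, nsmul_eq_mul]
      _ ≤ (k:ℝ) * q := by
          have : ((B.card:ℕ):ℝ) ≤ (k:ℝ) := by exact_mod_cast hBcard
          nlinarith [hq_pos]
      _ = q * k := mul_comm _ _
  have hBsplit : ∑ i ∈ Bᶜ, A i = (∑ i, A i) - ∑ i ∈ B, A i := by
    rw [← Finset.sum_add_sum_compl B A]; ring
  have hBc : q * (Real.sqrt n / 4) ≤ ∑ i ∈ Bᶜ, |A i| := by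
    have hnegabs : -(q*k) ≤ ∑ i ∈ B, A i := by
      have := neg_abs_le (∑ i ∈ B, A i)
      linarith
    have hub : ∑ i ∈ B, A i ≤ q*k := le_trans (le_abs_self _) hBsum
    calc q * (Real.sqrt n/4) = (q*(Real.sqrt n/4) + q*k) - q*k := by ring
      _ ≤ (∑ i, A i) - q*k := by rw [hsum]; linarith
      _ ≤ (∑ i, A i) - ∑ i ∈ B, A i := by linarith
      _ = ∑ i ∈ Bᶜ, A i := hBsplit.symm
      _ ≤ ∑ i ∈ Bᶜ, |A i| := Finset.sum_le_sum (fun i _ => le_abs_self _)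
  have hBne : ∃ i ∈ Bᶜ, q * Real.sqrt n / (4*n) ≤ |A i| := by
    by_contra hcon2
    push_neg at hcon2
    rcases Finset.eq_empty_or_nonempty Bᶜ with he | hne
    · rw [he, Finset.sum_empty] at hBc
      nlinarith [hq_pos, hsqrt_pos]
    · have hlt := Finset.sum_lt_sum_of_nonempty hne hcon2
      rw [Finset.sum_const, nsmul_eq_mul] at hlt
      have hcardc : ((Bᶜ.card : ℕ):ℝ) ≤ n := by
        have h1 : Bᶜ.card ≤ n := by
          calc Bᶜ.card ≤ Fintype.card (Fin n) := Finset.card_le_univ _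
            _ = n := Fintype.card_fin n
        exact_mod_cast h1
      have h2 : ((Bᶜ.card:ℕ):ℝ) * (q*Real.sqrt n/(4*n)) ≤ (n:ℝ) * (q*Real.sqrt n/(4*n)) := by
        apply mul_le_mul_of_nonneg_right hcardc
        positivity
      have heq : (n:ℝ) * (q*Real.sqrt n/(4*n)) = q*(Real.sqrt n/4) := by
        field_simp
      linarith
  obtain ⟨i, hiBc, hAi⟩ := hBne
  have hiB : i ∉ B := Finset.mem_compl.mp hiBc
  have hei : Pi.single i 1 ∈ W ⊔ perp V := by rw [hW.sup_eq_top]; trivial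
  obtain ⟨w, hwW, p, hpP, hwp⟩ := Submodule.mem_sup.mp hei
  have hipp : ∀ x : V, ip p (x:F2 n) = 0 := fun x => hpP _ x.2
  have hipw : ∀ x : V, ip w (x:F2 n) = (x:F2 n) i := by
    intro x
    have h9 : ip (w + p) (x:F2 n) = (x:F2 n) i := by rw [hwp, ip_single]
    rw [ip_add_left, hipp x, add_zero] at h9
    exact h9
  have hw0 : w ≠ 0 := by
    intro hw
    apply hiB
    rw [hB, Finset.mem_filter]
    refine ⟨Finset.mem_univ i, fun x hx => ?_⟩
    have h10 := hipw ⟨x, hx⟩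
    rw [hw, ip_zero_left] at h10
    exact h10.symm
  refine ⟨w, hwW, hw0, ?_⟩
  have hcoeff : restrictCoeff (majF n) V α w = (∑ x : V, g x * eps ((x:F2 n) i)) / q := by
    rw [restrictCoeff_eq', hcardV]
    congr 1
    refine Finset.sum_congr rfl fun x _ => ?_
    rw [chi_eq_eps, hipw x, hg]
  have hrel : |∑ x : V, g x * eps ((x:F2 n) i)| = |A i| := by
    rw [show A i = ∑ x : V, g x * eps (((x:F2 n) + α) i) from rfl]
    have h11 : ∀ x : V, g x * eps (((x:F2 n) + α) i)
        = (g x * eps ((x:F2 n) i)) * eps (α i) := by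
      intro x
      rw [show ((x:F2 n) + α) i = (x:F2 n) i + α i from rfl, eps_add]
      ring
    rw [Finset.sum_congr rfl (fun x _ => h11 x), ← Finset.sum_mul, abs_mul, abs_eps, mul_one]
  have hfinal : q * Real.sqrt n/(4*n) / q ≤ |restrictCoeff (majF n) V α w| := by
    rw [hcoeff, abs_div, abs_of_pos hq_pos]
    gcongr
    rw [hrel]
    exact hAi
  have hval : q * Real.sqrt n/(4*n)/q = Real.sqrt n/(4*n) := by field_simp
  have hs0 : Real.sqrt n ≠ 0 := ne_of_gt hsqrt_pos
  have hmul := Real.mul_self_sqrt hnpos.le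
  have hrpow : (1/4:ℝ) * (n:ℝ)^(-(1:ℝ)/2) = Real.sqrt n/(4*n) := by
    rw [show (-(1:ℝ)/2) = -(1/2) by norm_num, Real.rpow_neg hnpos.le, ← Real.sqrt_eq_rpow]
    rw [eq_div_iff (by positivity : (4:ℝ)*(n:ℝ) ≠ 0)]
    field_simp
    nlinarith [hmul]
  rw [hrpow]
  calc Real.sqrt n/(4*(n:ℝ)) = q * Real.sqrt n/(4*n)/q := hval.symm
    _ ≤ _ := hfinal


/-- majority has a nontrivial restricted Fourier coefficient of magnitude
Ω(n^{-1/2}) on every affine subspace of codimension at most √n/(10e) − 1; consequently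
any affine subspace on which MAJₙ is δ-regular (δ ≤ c·n^{-1/2}) has larger codimension. -/
theorem majority_lower_bound :
    ∃ (c : ℝ) (n₀ : ℕ), 0 < c ∧
      ∀ n : ℕ, n₀ ≤ n → Odd n →
        (∀ (V : Submodule (ZMod 2) (F2 n)) (α : F2 n),
          ((n - Module.finrank (ZMod 2) V : ℕ) : ℝ) ≤
              Real.sqrt n / (10 * Real.exp 1) - 1 →
          ∀ W : Submodule (ZMod 2) (F2 n), IsCompl W (perp V) →
            ∃ γ ∈ W, γ ≠ 0 ∧
              c * (n : ℝ) ^ (-(1 : ℝ) / 2) ≤ |restrictCoeff (majF n) V α γ|) ∧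
        ∀ δ : ℝ, δ ≤ c * (n : ℝ) ^ (-(1 : ℝ) / 2) →
          ∀ (V : Submodule (ZMod 2) (F2 n)) (α : F2 n),
            IsDeltaRegular (majF n) V α δ →
            Real.sqrt n / (10 * Real.exp 1) - 1 <
              ((n - Module.finrank (ZMod 2) V : ℕ) : ℝ) := by
  classical
  refine ⟨1/8, 1, by norm_num, fun n hn hodd => ⟨?_, ?_⟩⟩
  · intro V α hcodim W hW
    obtain ⟨γ, h1, h2, h3⟩ := majority_lb_main n hn hodd V α hcodim W hW
    refine ⟨γ, h1, h2, le_trans ?_ h3⟩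
    have h4 : (0:ℝ) ≤ (n:ℝ) ^ (-(1:ℝ)/2) := Real.rpow_nonneg (Nat.cast_nonneg n) _
    linarith
  · intro δ hδ V α hreg
    by_contra hcon
    push_neg at hcon
    obtain ⟨W, hW⟩ := Submodule.exists_isCompl (perp V)
    obtain ⟨γ, h1, h2, h3⟩ := majority_lb_main n hn hodd V α hcon W hW.symm
    have h4 := hreg W hW.symm γ h1 h2
    have h5 : (0:ℝ) < (n:ℝ) ^ (-(1:ℝ)/2) := by
      apply Real.rpow_pos_of_pos
      have : 0 < n := hn
      exact_mod_cast this
    linarith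
end Main
end
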